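/- arXiv:1409.8569 — 5 statements merged into one kernel-verified Lean document; each statement's English description precedes it below -/
import Mathlib

section
/- Let X be a complex Banach space, Y ⊆ X a finite-dimensional subspace, G ⊆ ℂ an open set, and n ≥ 1 an integer. Suppose F : G → B(X) is analytic (holomorphic as a map into the Banach space of bounded operators) and range(F(λ)) ⊆ Y for every λ ∈ G, so that Y is an invariant subspace of each F(λ). Then the function λ ↦ ∏_μ (1 − μ)·exp(∑_{j=1}^{n−1} μ^j/j), where the product runs over the multiset of roots in ℂ (counted with multiplicity) of the characteristic polynomial of the restriction of F(λ) to Y, is analytic on G. -/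
open scoped Classical

/-- The restriction of a bounded operator `T` to a subspace `Y`, provided `Y` is
invariant under `T` (junk value `0` otherwise). -/
noncomputable def restrictTo {X : Type*} [NormedAddCommGroup X] [NormedSpace ℂ X]
    (Y : Submodule ℂ X) (T : X →L[ℂ] X) : Y →ₗ[ℂ] Y :=
  if h : ∀ x ∈ Y, T x ∈ Y then (T : X →ₗ[ℂ] X).restrict h else 0

lemma analyticAt_det {d : ℕ} {A : ℂ → Matrix (Fin d) (Fin d) ℂ} {z : ℂ}
    (h : ∀ i j, AnalyticAt ℂ (fun w => A w i j) z) :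
    AnalyticAt ℂ (fun w => (A w).det) z := by
  simp only [Matrix.det_apply']
  exact Finset.analyticAt_fun_sum _ fun σ _ =>
    analyticAt_const.mul (Finset.analyticAt_fun_prod _ fun i _ => h (σ i) i)

lemma eval_charpoly {d : ℕ} (M : Matrix (Fin d) (Fin d) ℂ) (x : ℂ) :
    M.charpoly.eval x =
      (Matrix.of (fun i j => (if i = j then x else 0) - M i j)).det := by
  rw [Matrix.charpoly, ← Polynomial.coe_evalRingHom, RingHom.map_det]
  congr 1
  ext i j
  by_cases hij : i = j <;>
    simp [Matrix.charmatrix, hij, Matrix.map_apply]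

lemma analyticAt_charpoly_coeff {d : ℕ} {A : ℂ → Matrix (Fin d) (Fin d) ℂ} {z : ℂ}
    (h : ∀ i j, AnalyticAt ℂ (fun w => A w i j) z) (k : ℕ) :
    AnalyticAt ℂ (fun w => (A w).charpoly.coeff k) z := by
  have heval : ∀ x : ℂ, AnalyticAt ℂ (fun w => (A w).charpoly.eval x) z := by
    intro x
    simp only [eval_charpoly]
    exact analyticAt_det fun i j => analyticAt_const.sub (h i j)
  set v : Fin (d + 1) → ℂ := fun i => ((i : ℕ) : ℂ) with hv
  have hinj : Set.InjOn v (Finset.univ : Finset (Fin (d+1))) := by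
    intro a _ b _ hab
    have : ((a : ℕ) : ℂ) = ((b : ℕ) : ℂ) := hab
    exact Fin.ext (by exact_mod_cast this)
  have hrep : ∀ N : Matrix (Fin d) (Fin d) ℂ, N.charpoly.coeff k =
      ∑ i : Fin (d + 1), N.charpoly.eval (v i) * (Lagrange.basis Finset.univ v i).coeff k := by
    intro N
    have hdeg : N.charpoly.degree < (Finset.univ : Finset (Fin (d+1))).card := by
      rw [Matrix.charpoly_degree_eq_dim]
      simp [Fintype.card_fin]
      exact_mod_cast Nat.lt_succ_self d
    conv_lhs => rw [Lagrange.eq_interpolate hinj hdeg]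
    rw [Lagrange.interpolate_apply, Polynomial.finset_sum_coeff]
    exact Finset.sum_congr rfl fun i _ => by rw [Polynomial.coeff_C_mul]
  simp only [hrep]
  exact Finset.analyticAt_fun_sum _ fun i _ => (heval (v i)).mul analyticAt_const

lemma charpoly_roots_card {d : ℕ} (N : Matrix (Fin d) (Fin d) ℂ) :
    Multiset.card N.charpoly.roots = d := by
  rw [Polynomial.splits_iff_card_roots.mp (IsAlgClosed.splits _),
    Matrix.charpoly_natDegree_eq_dim, Fintype.card_fin]

lemma esymm_roots_eq {d : ℕ} (N : Matrix (Fin d) (Fin d) ℂ) {i : ℕ} (hi : i ≤ d) :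
    N.charpoly.roots.esymm i = (-1 : ℂ) ^ i * N.charpoly.coeff (d - i) := by
  have hnd : N.charpoly.natDegree = d := by
    rw [Matrix.charpoly_natDegree_eq_dim, Fintype.card_fin]
  have hco := Polynomial.coeff_eq_esymm_roots_of_splits
    (IsAlgClosed.splits N.charpoly : N.charpoly.Splits)
    (k := d - i) (by omega)
  rw [(Matrix.charpoly_monic N).leadingCoeff, one_mul, hnd,
    show d - (d - i) = i by omega] at hco
  rw [hco, ← mul_assoc, ← pow_add, Even.neg_one_pow ⟨i, by ring⟩, one_mul]

lemma analyticAt_esymm {d : ℕ} {A : ℂ → Matrix (Fin d) (Fin d) ℂ} {z : ℂ}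
    (h : ∀ i j, AnalyticAt ℂ (fun w => A w i j) z) (i : ℕ) :
    AnalyticAt ℂ (fun w => ((A w).charpoly.roots).esymm i) z := by
  by_cases hi : i ≤ d
  · simp only [fun w => esymm_roots_eq (A w) hi]
    exact analyticAt_const.mul (analyticAt_charpoly_coeff h _)
  · have : ∀ w, ((A w).charpoly.roots).esymm i = 0 := by
      intro w
      rw [Multiset.esymm, Multiset.powersetCard_eq_empty i
        (by rw [charpoly_roots_card]; omega)]
      simp
    simp only [this]
    exact analyticAt_const

lemma exp_multiset (s : Multiset ℂ) (g : ℂ → ℂ) :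
    (s.map fun μ => Complex.exp (g μ)).prod = Complex.exp ((s.map g).sum) := by
  induction s using Multiset.induction_on with
  | empty => simp
  | cons a s ih => simp [ih, Complex.exp_add]

lemma sum_swap_multiset (s : Multiset ℂ) (t : Finset ℕ) (h : ℕ → ℂ → ℂ) :
    (s.map fun μ => ∑ j ∈ t, h j μ).sum = ∑ j ∈ t, (s.map fun μ => h j μ).sum := by
  induction s using Multiset.induction_on with
  | empty => simp
  | cons a s ih => simp [ih, Finset.sum_add_distrib]

lemma exists_enum (s : Multiset ℂ) (n : ℕ) (h : Multiset.card s = n) :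
    ∃ x : Fin n → ℂ, (Finset.univ.val.map x) = s := by
  induction s using Quotient.inductionOn with
  | h l =>
    have hl : l.length = n := by simpa using h
    subst hl
    refine ⟨l.get, ?_⟩
    have : (Finset.univ.val : Multiset (Fin l.length)) = ↑(List.finRange l.length) := by
      simp [Fin.univ_def]
    rw [this]
    exact congrArg _ (List.map_get_finRange l)

lemma multiset_newton (s : Multiset ℂ) {k : ℕ} (hk : 0 < k) :
    (s.map (· ^ k)).sum = (-1:ℂ)^(k+1) * k * s.esymm k -
      ∑ a ∈ (Finset.HasAntidiagonal.antidiagonal k).filter (fun a => a.1 ∈ Set.Ioo 0 k),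
        (-1:ℂ)^a.1 * s.esymm a.1 * (s.map (· ^ a.2)).sum := by
  obtain ⟨x, hx⟩ := exists_enum s (Multiset.card s) rfl
  have key := congrArg (MvPolynomial.aeval (R := ℂ) x)
    (MvPolynomial.psum_eq_mul_esymm_sub_sum (Fin (Multiset.card s)) ℂ k hk)
  have hesymm : ∀ i, MvPolynomial.aeval (R := ℂ) x (MvPolynomial.esymm (Fin (Multiset.card s)) ℂ i)
      = s.esymm i := by
    intro i
    rw [MvPolynomial.aeval_esymm_eq_multiset_esymm, hx]
  have hpsum : ∀ i, MvPolynomial.aeval (R := ℂ) x (MvPolynomial.psum (Fin (Multiset.card s)) ℂ i)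
      = (s.map (· ^ i)).sum := by
    intro i
    rw [MvPolynomial.psum, map_sum]
    simp only [map_pow, MvPolynomial.aeval_X]
    calc ∑ j, x j ^ i = (Finset.univ.val.map (fun j => x j ^ i)).sum := rfl
      _ = ((Finset.univ.val.map x).map (· ^ i)).sum := by rw [Multiset.map_map]; rfl
      _ = (s.map (· ^ i)).sum := by rw [hx]
  simpa only [map_sub, map_mul, map_pow, map_neg, map_one, map_natCast, map_sum,
    hesymm, hpsum] using key

lemma analyticAt_psum {d : ℕ} {A : ℂ → Matrix (Fin d) (Fin d) ℂ} {z : ℂ}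
    (h : ∀ i j, AnalyticAt ℂ (fun w => A w i j) z) :
    ∀ k, 1 ≤ k → AnalyticAt ℂ (fun w => (((A w).charpoly.roots).map (· ^ k)).sum) z := by
  intro k
  induction k using Nat.strong_induction_on with
  | _ k ih =>
    intro hk
    have hrw := fun w => multiset_newton ((A w).charpoly.roots) (k := k) (by omega)
    simp only [hrw]
    apply AnalyticAt.sub
    · exact analyticAt_const.mul (analyticAt_esymm h k)
    · refine Finset.analyticAt_fun_sum _ fun a ha => ?_
      rw [Finset.mem_filter, Finset.HasAntidiagonal.mem_antidiagonal, Set.mem_Ioo] at ha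
      exact (analyticAt_const.mul (analyticAt_esymm h a.1)).mul
        (ih a.2 (by omega) (by omega))

/-- Let `X` be a complex Banach space, `Y ⊆ X` a finite-dimensional
subspace, `G ⊆ ℂ` open and `n ≥ 1`. If `F : G → B(X)` is analytic and
`range (F λ) ⊆ Y` for every `λ ∈ G`, then the function
`λ ↦ ∏_μ (1 − μ)·exp(∑_{j=1}^{n−1} μ^j/j)`, the product running over the multiset of
roots (with multiplicity) of the characteristic polynomial of the restriction of
`F λ` to `Y`, is analytic on `G`. -/
theorem statement0 {X : Type*} [NormedAddCommGroup X] [NormedSpace ℂ X] [CompleteSpace X]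
    (Y : Submodule ℂ X) [FiniteDimensional ℂ Y]
    (G : Set ℂ) (hG : IsOpen G) (n : ℕ) (hn : 1 ≤ n)
    (F : ℂ → X →L[ℂ] X)
    (hFanalytic : ∀ z ∈ G, AnalyticAt ℂ F z)
    (hFrange : ∀ z ∈ G, LinearMap.range ((F z : X →ₗ[ℂ] X)) ≤ Y) :
    ∀ z ∈ G, AnalyticAt ℂ (fun w =>
      (((restrictTo Y (F w)).charpoly.roots).map
        (fun μ => (1 - μ) *
          Complex.exp (∑ j ∈ Finset.range (n - 1), μ ^ (j + 1) / ((j : ℂ) + 1)))).prod) z := by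
  intro z hz
  obtain ⟨π, hπ⟩ := Submodule.ClosedComplemented.of_finiteDimensional Y
  set d := Module.finrank ℂ Y with hd
  let b : Module.Basis (Fin d) ℂ Y := Module.finBasis ℂ Y
  let Ψ : (X →L[ℂ] X) →L[ℂ] (Y →L[ℂ] Y) :=
    ((ContinuousLinearMap.compL ℂ Y X Y) π).comp
      (((ContinuousLinearMap.compL ℂ Y X X).flip) Y.subtypeL)
  let ℓ : Fin d → Fin d → (Y →L[ℂ] Y) →L[ℂ] ℂ := fun i j =>
    (LinearMap.toContinuousLinearMap (b.coord i)).comp (ContinuousLinearMap.apply ℂ Y (b j))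
  let A : ℂ → Matrix (Fin d) (Fin d) ℂ := fun w => Matrix.of fun i j => ℓ i j (Ψ (F w))
  have hAanalytic : ∀ i j, AnalyticAt ℂ (fun w => A w i j) z := by
    intro i j
    exact (((ℓ i j).comp Ψ).analyticAt _).comp (hFanalytic z hz)
  have hA : ∀ w ∈ G, A w = LinearMap.toMatrix b b (restrictTo Y (F w)) := by
    intro w hw
    have hinv : ∀ x ∈ Y, F w x ∈ Y := fun x _ => hFrange w hw ⟨x, rfl⟩
    have hres : restrictTo Y (F w) = (F w : X →ₗ[ℂ] X).restrict hinv := dif_pos hinv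
    ext i j
    rw [LinearMap.toMatrix_apply, hres]
    show b.repr (π ((F w) ((b j : Y) : X))) i = _
    have hm : (F w) ((b j : Y) : X) ∈ Y := hinv _ (b j).2
    have : π ((F w) ((b j : Y) : X)) = ⟨(F w) ((b j : Y) : X), hm⟩ := hπ ⟨_, hm⟩
    rw [this]
    congr 1
  have hchar : ∀ w ∈ G, (restrictTo Y (F w)).charpoly = (A w).charpoly := by
    intro w hw
    rw [hA w hw, LinearMap.charpoly_toMatrix]
  have hR : AnalyticAt ℂ (fun w => (A w).charpoly.eval 1 *
      Complex.exp (∑ j ∈ Finset.range (n-1),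
        (((A w).charpoly.roots).map (· ^ (j+1))).sum * (((j:ℂ)+1))⁻¹)) z := by
    apply AnalyticAt.mul
    · simp only [eval_charpoly]
      exact analyticAt_det fun i j => analyticAt_const.sub (hAanalytic i j)
    · exact (Finset.analyticAt_fun_sum _ fun j _ =>
        (analyticAt_psum hAanalytic (j+1) (Nat.succ_le_succ (Nat.zero_le j))).mul
          analyticAt_const).cexp
  apply hR.congr
  apply Filter.eventuallyEq_of_mem (hG.mem_nhds hz)
  intro w hw
  show (A w).charpoly.eval 1 * _ = _
  beta_reduce
  rw [hchar w hw]
  set s := (A w).charpoly.roots with hs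
  rw [Multiset.prod_map_mul]
  congr 1
  · conv_lhs => rw [(IsAlgClosed.splits _).eq_prod_roots_of_monic
      (Matrix.charpoly_monic (A w))]
    rw [Polynomial.eval_multiset_prod, Multiset.map_map]
    simp
    rfl
  · rw [exp_multiset, sum_swap_multiset]
    congr 1
    refine Finset.sum_congr rfl fun j _ => ?_
    simp only [div_eq_mul_inv]
    rw [Multiset.sum_map_mul_right]
end

section
/- Let X be a complex Banach space, L₁, L₂ ∈ B(X) with F := L₂ − L₁ of finite rank, let p > 0, and for λ ∈ ℂ ∖ σ(L₁) let d(λ) := det_{⌈p⌉}(1 − F·(λ − L₁)^{−1}). Then for every λ₀ ∈ ℂ ∖ σ(L₁): d(λ₀) = 0 if and only if λ₀ is an eigenvalue of L₂ (i.e., L₂x = λ₀x for some x ≠ 0). -/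
open scoped Classical

/-- The `n`-regularized determinant `det_n(1 − F)` of a finite-rank operator `F`
(junk value `0` if `F` is not of finite rank). -/
noncomputable def regDet {X : Type*} [NormedAddCommGroup X] [NormedSpace ℂ X]
    (n : ℕ) (F : X →L[ℂ] X) : ℂ :=
  if h : FiniteDimensional ℂ (LinearMap.range (F : X →ₗ[ℂ] X)) then
    letI := h
    (((F : X →ₗ[ℂ] X).restrict
        (p := LinearMap.range (F : X →ₗ[ℂ] X)) (q := LinearMap.range (F : X →ₗ[ℂ] X))
        (fun x _ => LinearMap.mem_range_self _ x)).charpoly.roots.map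
      (fun μ => (1 - μ) * Complex.exp (∑ j ∈ Finset.range (n - 1), μ ^ (j + 1) / ((j : ℂ) + 1)))).prod
  else 0

/-- The resolvent `(z − L)⁻¹` of a bounded operator `L` (junk value `0` for `z ∈ σ(L)`). -/
noncomputable def resolv {X : Type*} [NormedAddCommGroup X] [NormedSpace ℂ X]
    (L : X →L[ℂ] X) (z : ℂ) : X →L[ℂ] X :=
  Ring.inverse (algebraMap ℂ (X →L[ℂ] X) z - L)

open Polynomial in
lemma eval_charpoly_eq_zero_iff {V : Type*} [AddCommGroup V] [Module ℂ V]
    [FiniteDimensional ℂ V] (φ : Module.End ℂ V) (μ : ℂ) :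
    (φ.charpoly).eval μ = 0 ↔ ∃ v : V, v ≠ 0 ∧ φ v = μ • v := by
  classical
  have key : LinearMap.det (algebraMap ℂ (Module.End ℂ V) μ - φ) = (φ.charpoly).eval μ := by
    let b := Module.finBasis ℂ V
    rw [← LinearMap.charpoly_toMatrix φ b, ← LinearMap.det_toMatrix b]
    rw [Matrix.charpoly, ← Polynomial.coe_evalRingHom, RingHom.map_det]
    congr 1
    ext i j
    by_cases h : i = j
    · subst h
      simp [Matrix.charmatrix_apply_eq, Algebra.algebraMap_eq_smul_one, Matrix.smul_apply,
        Matrix.one_apply]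
    · simp [Matrix.charmatrix_apply_ne _ _ _ h, Algebra.algebraMap_eq_smul_one,
        Matrix.smul_apply, Matrix.one_apply_ne h]
  constructor
  · intro h
    have hdet : LinearMap.det (algebraMap ℂ (Module.End ℂ V) μ - φ) = 0 := by rw [key, h]
    obtain ⟨v, hv, hv0⟩ := SetLike.exists_of_lt (LinearMap.bot_lt_ker_of_det_eq_zero hdet)
    refine ⟨v, fun h0 => hv0 (by simp [h0]), ?_⟩
    have h1 : (algebraMap ℂ (Module.End ℂ V) μ - φ) v = 0 := hv
    have h2 : μ • v - φ v = 0 := by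
      simpa [Algebra.algebraMap_eq_smul_one] using h1
    linear_combination (norm := module) -h2
  · rintro ⟨v, hv0, hv⟩
    have he : φ.HasEigenvalue μ := by
      apply Module.End.hasEigenvalue_of_hasEigenvector ⟨?_, hv0⟩
      rw [Module.End.mem_eigenspace_iff]; exact hv
    have hroot : (minpoly ℂ φ).IsRoot μ := (Module.End.hasEigenvalue_iff_isRoot).mp he
    exact hroot.dvd (LinearMap.minpoly_dvd_charpoly φ)


/-- Let `L₁, L₂` be bounded operators on a complex Banach space with
`F := L₂ − L₁` of finite rank, `p > 0`, and for `λ ∉ σ(L₁)` let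
`d(λ) := det_{⌈p⌉}(1 − (L₂ − L₁)·(λ − L₁)⁻¹)`. Then for every `λ₀ ∉ σ(L₁)`:
`d(λ₀) = 0` iff `λ₀` is an eigenvalue of `L₂`. -/
theorem statement3 {X : Type*} [NormedAddCommGroup X] [NormedSpace ℂ X] [CompleteSpace X]
    (L₁ L₂ : X →L[ℂ] X)
    (hF : FiniteDimensional ℂ (LinearMap.range ((L₂ - L₁ : X →L[ℂ] X) : X →ₗ[ℂ] X)))
    (p : ℝ) (hp : 0 < p)
    (lam : ℂ) (hlam : lam ∉ spectrum ℂ L₁) :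
    regDet ⌈p⌉₊ ((L₂ - L₁) ∘L resolv L₁ lam) = 0 ↔
      ∃ x : X, x ≠ 0 ∧ L₂ x = lam • x := by
  set A : X →L[ℂ] X := algebraMap ℂ (X →L[ℂ] X) lam - L₁ with hA_def
  have hA : IsUnit A := spectrum.notMem_iff.mp hlam
  have hAx : ∀ z : X, A z = lam • z - L₁ z := fun z => by
    simp [hA_def, Algebra.algebraMap_eq_smul_one]
  set R : X →L[ℂ] X := resolv L₁ lam with hR_def
  have hRA : R * A = 1 := by rw [hR_def, resolv, ← hA_def]; exact Ring.inverse_mul_cancel A hA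
  have hAR : A * R = 1 := by rw [hR_def, resolv, ← hA_def]; exact Ring.mul_inverse_cancel A hA
  set G : X →L[ℂ] X := (L₂ - L₁) ∘L R with hG_def
  -- finite dimensionality of range G
  have hle : LinearMap.range (G : X →ₗ[ℂ] X) ≤
      LinearMap.range ((L₂ - L₁ : X →L[ℂ] X) : X →ₗ[ℂ] X) := by
    rintro x ⟨y, rfl⟩
    exact ⟨R y, rfl⟩
  have hG : FiniteDimensional ℂ (LinearMap.range (G : X →ₗ[ℂ] X)) :=
    Submodule.finiteDimensional_of_le hle
  rw [regDet, dif_pos hG]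
  set ψ := ((G : X →ₗ[ℂ] X).restrict
      (p := LinearMap.range (G : X →ₗ[ℂ] X)) (q := LinearMap.range (G : X →ₗ[ℂ] X))
      (fun x _ => LinearMap.mem_range_self _ x)) with hψ_def
  have h1 : (ψ.charpoly.roots.map
      (fun μ => (1 - μ) * Complex.exp (∑ j ∈ Finset.range (⌈p⌉₊ - 1),
        μ ^ (j + 1) / ((j : ℂ) + 1)))).prod = 0 ↔ (1 : ℂ) ∈ ψ.charpoly.roots := by
    rw [Multiset.prod_eq_zero_iff]
    constructor
    · intro h
      obtain ⟨μ, hμ, hμ0⟩ := Multiset.mem_map.mp h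
      rcases mul_eq_zero.mp hμ0 with h' | h'
      · rwa [sub_eq_zero.mp h']
      · exact absurd h' (Complex.exp_ne_zero _)
    · intro h
      exact Multiset.mem_map.mpr ⟨1, h, by simp⟩
  rw [h1]
  have h2 : (1 : ℂ) ∈ ψ.charpoly.roots ↔ ψ.charpoly.eval 1 = 0 := by
    rw [Polynomial.mem_roots (ψ.charpoly_monic.ne_zero)]
    exact Iff.rfl
  rw [h2, eval_charpoly_eq_zero_iff]
  -- now: (∃ v ≠ 0, ψ v = v) ↔ (∃ x ≠ 0, L₂ x = lam • x)
  constructor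
  · rintro ⟨v, hv0, hv⟩
    have hGv : G (v : X) = (v : X) := by
      have := congrArg (Subtype.val) hv
      simpa [hψ_def, LinearMap.restrict_apply] using this
    -- x := R v
    refine ⟨R v, ?_, ?_⟩
    · intro h0
      apply hv0
      have : A (R (v : X)) = 0 := by rw [h0, map_zero]
      rw [← ContinuousLinearMap.comp_apply, ← ContinuousLinearMap.mul_def, hAR] at this
      exact Subtype.ext (by simpa using this)
    · have hfix : (L₂ - L₁) (R (v : X)) = (v : X) := hGv
      have hARv : A (R (v : X)) = (v : X) := by
        rw [← ContinuousLinearMap.comp_apply, ← ContinuousLinearMap.mul_def, hAR]; simp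
      have heq : L₂ (R (v:X)) - L₁ (R (v:X)) = lam • (R (v:X)) - L₁ (R (v:X)) := by
        rw [← hAx, hARv, ← ContinuousLinearMap.sub_apply, hfix]
      exact sub_left_inj.mp heq
  · rintro ⟨x, hx0, hx⟩
    set y : X := A x with hy_def
    have hyF : y = (L₂ - L₁) x := by
      rw [hy_def, hAx, ← hx, ContinuousLinearMap.sub_apply]
    have hRy : R y = x := by
      rw [hy_def, ← ContinuousLinearMap.comp_apply, ← ContinuousLinearMap.mul_def, hRA]; rfl
    have hGy : G y = y := by
      rw [hG_def, ContinuousLinearMap.comp_apply, hRy, ← hyF]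
    have hy0 : y ≠ 0 := fun h0 => hx0 (by rw [← hRy, h0, map_zero])
    have hmem : y ∈ LinearMap.range (G : X →ₗ[ℂ] X) := ⟨y, hGy⟩
    refine ⟨⟨y, hmem⟩, fun h0 => hy0 (congrArg Subtype.val h0), ?_⟩
    apply Subtype.ext
    simpa [hψ_def, LinearMap.restrict_apply] using hGy
end

section
/- Let h be an analytic function on the open unit disk 𝔻 ⊆ ℂ with |h(z)| ≤ M for all z ∈ 𝔻 and |h(0)| = 1, and let 0 < r < 1. Then the set Z_r := {z ∈ ℂ : |z| ≤ r, h(z) = 0} is finite, and n(h; r)·log(1/r) ≤ log M, where n(h; r) := ∑_{z ∈ Z_r} ord_z(h) is the number of zeros of h in the closed disk of radius r counted with multiplicity (ord_z(h) denotes the order of vanishing of h at z). -/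
/-- The order of vanishing of `h` at `z`: the largest `n` such that all derivatives of
order `< n` of `h` vanish at `z` (equal to the multiplicity of `z` as a zero when `h`
is analytic near `z` and not identically zero). -/
noncomputable def vanishingOrder (h : ℂ → ℂ) (z : ℂ) : ℕ :=
  sSup {n : ℕ | ∀ k < n, iteratedDeriv k h z = 0}

namespace Statement8Aux

open Metric Filter Set Function
open scoped Topology

lemma vanishingOrder_eq_zero_of_ne_zero {f : ℂ → ℂ} {z : ℂ} (h : f z ≠ 0) :
    vanishingOrder f z = 0 := by
  have hs : {n : ℕ | ∀ k < n, iteratedDeriv k f z = 0} = {0} := by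
    ext n
    simp only [mem_setOf_eq, mem_singleton_iff]
    constructor
    · intro hn
      by_contra h0
      exact h (by simpa using hn 0 (Nat.pos_of_ne_zero h0))
    · rintro rfl k hk; omega
  rw [vanishingOrder, hs, csSup_singleton]

lemma vanishingOrder_eq_series_order {f : ℂ → ℂ} {z : ℂ}
    {p : FormalMultilinearSeries ℂ ℂ ℂ} (hp : HasFPowerSeriesAt f p z) (hp0 : p ≠ 0) :
    vanishingOrder f z = p.order := by
  have hiter : ∀ k, (iteratedDeriv k f z = 0 ↔ p.coeff k = 0) := by
    intro k
    obtain ⟨R, hR⟩ := hp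
    have h1 : Nat.factorial k • p.coeff k = iteratedDeriv k f z := by
      rw [iteratedDeriv_eq_iteratedFDeriv]
      exact hR.factorial_smul 1 k
    rw [← h1, nsmul_eq_mul, mul_eq_zero]
    simp [Nat.factorial_ne_zero]
  have hs : {n : ℕ | ∀ k < n, iteratedDeriv k f z = 0} = Set.Iic p.order := by
    ext n
    simp only [mem_setOf_eq, mem_Iic]
    constructor
    · intro hn
      by_contra h0
      push_neg at h0
      have := (hiter p.order).mp (hn p.order h0)
      exact FormalMultilinearSeries.apply_order_ne_zero hp0
        (FormalMultilinearSeries.coeff_eq_zero.mp this)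
    · intro hn k hk
      exact (hiter k).mpr (FormalMultilinearSeries.coeff_eq_zero.mpr
        (FormalMultilinearSeries.apply_eq_zero_of_lt_order (lt_of_lt_of_le hk hn)))
  rw [vanishingOrder, hs, csSup_Iic]

lemma analyticAt_order_eq_series_order {f : ℂ → ℂ} {z : ℂ}
    {p : FormalMultilinearSeries ℂ ℂ ℂ} (hp : HasFPowerSeriesAt f p z) (hp0 : p ≠ 0) :
    analyticOrderAt f z = (p.order : ℕ∞) := by
  rw [hp.analyticAt.analyticOrderAt_eq_natCast]
  exact ⟨_, ⟨_, hp.has_fpower_series_iterate_dslope_fslope p.order⟩,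
    hp.iterate_dslope_fslope_ne_zero hp0, Filter.Eventually.of_forall hp.eq_pow_order_mul_iterate_dslope⟩

lemma order_eq_vanishingOrder {f : ℂ → ℂ} {z : ℂ} (hf : AnalyticAt ℂ f z)
    (hne : ¬ ∀ᶠ w in 𝓝 z, f w = 0) :
    analyticOrderAt f z = (vanishingOrder f z : ℕ∞) := by
  obtain ⟨p, hp⟩ := hf
  have hp0 : p ≠ 0 := fun h => hne (hp.locally_zero_iff.mpr h)
  rw [vanishingOrder_eq_series_order hp hp0]
  exact analyticAt_order_eq_series_order hp hp0

lemma not_eventually_zero {f : ℂ → ℂ} (hf : AnalyticOnNhd ℂ f (ball (0:ℂ) 1)) (h0 : f 0 ≠ 0)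
    {z : ℂ} (hz : z ∈ ball (0:ℂ) 1) : ¬ ∀ᶠ w in 𝓝 z, f w = 0 := by
  intro H
  exact h0 (hf.eqOn_zero_of_preconnected_of_eventuallyEq_zero
    (convex_ball (0:ℂ) 1).isPreconnected hz H (mem_ball_self one_pos))

lemma mem_ball_of_abs_le {r : ℝ} (hr : r < 1) {z : ℂ} (hz : ‖z‖ ≤ r) :
    z ∈ ball (0:ℂ) 1 := by
  simp only [mem_ball, dist_zero_right]
  exact lt_of_le_of_lt hz hr

lemma zeros_finite {f : ℂ → ℂ} (hf : AnalyticOnNhd ℂ f (ball (0:ℂ) 1)) (h0 : f 0 ≠ 0)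
    {r : ℝ} (hr1 : r < 1) :
    {z : ℂ | ‖z‖ ≤ r ∧ f z = 0}.Finite := by
  by_contra hinf
  rw [← Set.not_infinite, not_not] at hinf
  have hsub : {z : ℂ | ‖z‖ ≤ r ∧ f z = 0} ⊆ closedBall (0:ℂ) r := by
    intro z hz
    simpa [mem_closedBall, dist_zero_right] using hz.1
  obtain ⟨x, hxK, hx⟩ := hinf.exists_accPt_of_subset_isCompact (isCompact_closedBall _ _) hsub
  have hxb : x ∈ ball (0:ℂ) 1 := by
    rw [mem_closedBall, dist_zero_right] at hxK
    exact mem_ball_of_abs_le hr1 hxK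
  have hfreq : ∃ᶠ z in 𝓝[≠] x, f z = 0 := by
    rw [accPt_iff_frequently] at hx
    rw [frequently_nhdsWithin_iff]
    exact hx.mono fun z hz => ⟨hz.2.2, hz.1⟩
  exact h0 (hf.eqOn_zero_of_preconnected_of_frequently_eq_zero
    (convex_ball (0:ℂ) 1).isPreconnected hxb hfreq (mem_ball_self one_pos))

lemma analyticOnNhd_dslope {f : ℂ → ℂ} (hf : AnalyticOnNhd ℂ f (ball (0:ℂ) 1)) {w : ℂ}
    (hw : w ∈ ball (0:ℂ) 1) : AnalyticOnNhd ℂ (dslope f w) (ball (0:ℂ) 1) := by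
  intro z hz
  rcases eq_or_ne z w with rfl | hzw
  · obtain ⟨p, hp⟩ := hf z hz
    exact hp.has_fpower_series_dslope_fslope.analyticAt
  · have heq : (fun u => (f u - f w) / (u - w)) =ᶠ[𝓝 z] dslope f w := by
      filter_upwards [isOpen_ne.mem_nhds hzw] with u hu
      rw [dslope_of_ne f hu, slope_def_field]
    exact (((hf z hz).sub analyticAt_const).div
      (analyticAt_id.sub analyticAt_const) (sub_ne_zero.mpr hzw)).congr heq

lemma key_ineq {w ζ : ℂ} {ρ : ℝ} (hζ : ‖ζ‖ = ρ) (hsρ : ‖w‖ < ρ)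
    (hρ : ρ < 1) :
    ‖1 - (starRingEnd ℂ) w * ζ‖ * (ρ - ‖w‖)
      ≤ (1 - ‖w‖ * ρ) * ‖ζ - w‖ := by
  set s := ‖w‖ with hs
  have hs0 : 0 ≤ s := norm_nonneg w
  have hρ0 : 0 < ρ := lt_of_le_of_lt hs0 hsρ
  have hs1 : s < 1 := hsρ.trans hρ
  set t := (starRingEnd ℂ) w * ζ with ht
  have habs_t : ‖t‖ = s * ρ := by rw [ht, norm_mul, Complex.norm_conj, hζ]
  have h_re : t.re ≤ s * ρ := by rw [← habs_t]; exact Complex.re_le_norm t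
  have ht2 : t.re * t.re + t.im * t.im = (s * ρ)^2 := by
    rw [← Complex.normSq_apply, ← Complex.sq_norm, habs_t]
  have hζ2 : ζ.re * ζ.re + ζ.im * ζ.im = ρ^2 := by
    rw [← Complex.normSq_apply, ← Complex.sq_norm, hζ]
  have hw2 : w.re * w.re + w.im * w.im = s^2 := by
    rw [← Complex.normSq_apply, ← Complex.sq_norm]
  have htre : t.re = w.re * ζ.re + w.im * ζ.im := by
    rw [ht, Complex.mul_re, Complex.conj_re, Complex.conj_im]; ring
  have e1 : (‖1 - t‖)^2 = 1 - 2 * t.re + (s * ρ)^2 := by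
    rw [Complex.sq_norm, Complex.normSq_apply, Complex.sub_re, Complex.sub_im,
      Complex.one_re, Complex.one_im]
    linear_combination ht2
  have e2 : (‖ζ - w‖)^2 = ρ^2 - 2 * t.re + s^2 := by
    rw [Complex.sq_norm, Complex.normSq_apply, Complex.sub_re, Complex.sub_im]
    linear_combination hζ2 + hw2 + 2 * htre
  have hsq : (‖1 - t‖ * (ρ - s))^2 ≤ ((1 - s * ρ) * ‖ζ - w‖)^2 := by
    rw [mul_pow, mul_pow, e1, e2]
    nlinarith [mul_nonneg (mul_nonneg (sub_nonneg.2 h_re)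
      (by nlinarith : (0:ℝ) ≤ 1 - ρ^2)) (by nlinarith : (0:ℝ) ≤ 1 - s^2)]
  have hB : 0 ≤ (1 - s * ρ) * ‖ζ - w‖ :=
    mul_nonneg (by nlinarith) (norm_nonneg _)
  have hA : 0 ≤ ‖1 - t‖ * (ρ - s) :=
    mul_nonneg (norm_nonneg _) (by linarith)
  exact (pow_le_pow_iff_left₀ hA hB two_ne_zero).mp hsq

lemma g_bound {M r : ℝ} (hr1 : r < 1) {f : ℂ → ℂ}
    (hf : AnalyticOnNhd ℂ f (ball (0:ℂ) 1))
    (hM : ∀ z ∈ ball (0:ℂ) 1, ‖f z‖ ≤ M)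
    {w : ℂ} (hwr : ‖w‖ ≤ r) (hw0 : f w = 0) {z : ℂ} (hz : z ∈ ball (0:ℂ) 1) :
    ‖dslope f w z * (1 - (starRingEnd ℂ) w * z)‖ ≤ M := by
  have hM0 : 0 ≤ M := le_trans (norm_nonneg _) (hM 0 (mem_ball_self one_pos))
  set s := ‖w‖ with hs
  have hs0 : 0 ≤ s := norm_nonneg w
  have hr0 : 0 ≤ r := le_trans hs0 hwr
  have hs1 : s < 1 := lt_of_le_of_lt hwr hr1
  have hwball : w ∈ ball (0:ℂ) 1 := by
    simp only [mem_ball, dist_zero_right]; exact hs1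
  set g : ℂ → ℂ := fun z => dslope f w z * (1 - (starRingEnd ℂ) w * z) with hg
  have hG : AnalyticOnNhd ℂ g (ball (0:ℂ) 1) := fun z hz =>
    ((analyticOnNhd_dslope hf hwball) z hz).mul
      (analyticAt_const.sub (analyticAt_const.mul analyticAt_id))
  have habz : ‖z‖ < 1 := by
    simpa [mem_ball, dist_zero_right] using hz
  have htend : Tendsto (fun ρ : ℝ => M * ((1 - s * ρ) / (ρ - s))) (𝓝[<] (1:ℝ)) (𝓝 M) := by
    have hc : ContinuousAt (fun ρ : ℝ => M * ((1 - s * ρ) / (ρ - s))) 1 := by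
      apply ContinuousAt.mul continuousAt_const
      apply ContinuousAt.div (by fun_prop) (by fun_prop)
      simp only [ne_eq]
      intro hcon
      nlinarith
    have hval : M * ((1 - s * 1) / (1 - s)) = M := by
      rw [mul_one, div_self (by nlinarith), mul_one]
    have h2 := hc.tendsto
    simp only [mul_one] at h2 hval
    rw [hval] at h2
    exact h2.mono_left nhdsWithin_le_nhds
  refine ge_of_tendsto htend ?_
  have hmax1 : max (‖z‖) r < 1 := max_lt habz hr1
  filter_upwards [Ioo_mem_nhdsLT_of_mem (show (1:ℝ) ∈ Ioc (max (‖z‖) r) 1 from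
    ⟨hmax1, le_refl 1⟩)] with ρ hρ
  obtain ⟨hρl, hρ1⟩ := hρ
  have hzρ : ‖z‖ < ρ := lt_of_le_of_lt (le_max_left _ _) hρl
  have hrρ : r < ρ := lt_of_le_of_lt (le_max_right _ _) hρl
  have hsρ : s < ρ := lt_of_le_of_lt hwr hrρ
  have hρ0 : 0 < ρ := lt_of_le_of_lt hs0 hsρ
  have hsub : closedBall (0:ℂ) ρ ⊆ ball (0:ℂ) 1 := closedBall_subset_ball hρ1
  have hdc : DiffContOnCl ℂ g (ball (0:ℂ) ρ) := by
    apply DifferentiableOn.diffContOnCl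
    rw [closure_ball (0:ℂ) (ne_of_gt hρ0)]
    exact hG.differentiableOn.mono hsub
  have hbd : ∀ ζ ∈ frontier (ball (0:ℂ) ρ), ‖g ζ‖ ≤ M * ((1 - s * ρ) / (ρ - s)) := by
    intro ζ hζ
    rw [frontier_ball (0:ℂ) (ne_of_gt hρ0)] at hζ
    have hζρ : ‖ζ‖ = ρ := by
      simpa [mem_sphere_iff_norm] using hζ
    have hζw : ζ ≠ w := by
      intro hcon; rw [hcon] at hζρ; rw [← hζρ] at hsρ; exact lt_irrefl _ hsρ
    have hζb : ζ ∈ ball (0:ℂ) 1 := by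
      simp only [mem_ball, dist_zero_right, hζρ]; exact hρ1
    have hgζ : g ζ = f ζ / (ζ - w) * (1 - (starRingEnd ℂ) w * ζ) := by
      rw [hg]; simp only
      rw [dslope_of_ne f hζw, slope_def_field, hw0, sub_zero]
    rw [hgζ, norm_mul, norm_div]
    have hζwpos : 0 < ‖ζ - w‖ := by
      rw [norm_pos_iff]; exact sub_ne_zero.mpr hζw
    have hdiv : ‖1 - (starRingEnd ℂ) w * ζ‖ / ‖ζ - w‖
        ≤ (1 - s * ρ) / (ρ - s) := by
      rw [div_le_div_iff₀ hζwpos (by linarith)]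
      exact key_ineq hζρ hsρ hρ1
    rw [div_mul_eq_mul_div, mul_comm (‖f ζ‖), ← div_mul_eq_mul_div,
      mul_comm M ((1 - s * ρ) / (ρ - s))]
    exact mul_le_mul hdiv (hM ζ hζb) (norm_nonneg _)
      (div_nonneg (by nlinarith) (by linarith))
  have hzcl : z ∈ closure (ball (0:ℂ) ρ) := subset_closure
    (by simp only [mem_ball, dist_zero_right]; exact hzρ)
  have := Complex.norm_le_of_forall_mem_frontier_norm_le isBounded_ball hdc hbd hzcl
  exact this

lemma u_ne_zero {w z : ℂ} (hw : ‖w‖ < 1) (hz : ‖z‖ < 1) :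
    1 - (starRingEnd ℂ) w * z ≠ 0 := by
  intro hcon
  have h1 : (1:ℂ) = (starRingEnd ℂ) w * z := by linear_combination hcon
  have := congrArg norm h1
  rw [norm_one, norm_mul, Complex.norm_conj] at this
  nlinarith [norm_nonneg w, norm_nonneg z]

lemma order_ne_case {f : ℂ → ℂ} {w z' : ℂ} (hfz : AnalyticAt ℂ f z')
    (hgz : AnalyticAt ℂ (fun z => dslope f w z * (1 - (starRingEnd ℂ) w * z)) z')
    (hw0 : f w = 0) (hz'w : z' ≠ w) (hw1 : ‖w‖ < 1) (hz'1 : ‖z'‖ < 1)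
    {n : ℕ} (hord : analyticOrderAt f z' = (n : ℕ∞)) :
    analyticOrderAt (fun z => dslope f w z * (1 - (starRingEnd ℂ) w * z)) z' = (n : ℕ∞) := by
  obtain ⟨G, hGa, hGne, heq⟩ := (hfz.analyticOrderAt_eq_natCast (n := n)).mp hord
  rw [hgz.analyticOrderAt_eq_natCast]
  refine ⟨fun z => G z * ((1 - (starRingEnd ℂ) w * z) / (z - w)), ?_, ?_, ?_⟩
  · exact hGa.mul ((analyticAt_const.sub (analyticAt_const.mul analyticAt_id)).div
      (analyticAt_id.sub analyticAt_const) (sub_ne_zero.mpr hz'w))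
  · exact mul_ne_zero hGne (div_ne_zero (u_ne_zero hw1 hz'1) (sub_ne_zero.mpr hz'w))
  · filter_upwards [isOpen_ne.mem_nhds hz'w, heq] with z hzw hfz'
    rw [dslope_of_ne f hzw, slope_def_field, hw0, sub_zero, hfz']
    simp only [smul_eq_mul]
    ring

lemma order_w_case {f : ℂ → ℂ} {w : ℂ} (hfz : AnalyticAt ℂ f w)
    (hgz : AnalyticAt ℂ (fun z => dslope f w z * (1 - (starRingEnd ℂ) w * z)) w)
    (hw0 : f w = 0) (hw1 : ‖w‖ < 1)
    {n : ℕ} (hord : analyticOrderAt f w = (n : ℕ∞)) :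
    ∃ m : ℕ, n = m + 1 ∧ analyticOrderAt (fun z => dslope f w z * (1 - (starRingEnd ℂ) w * z)) w = (m : ℕ∞) := by
  obtain ⟨G, hGa, hGne, heq⟩ := (hfz.analyticOrderAt_eq_natCast (n := n)).mp hord
  have hn0 : n ≠ 0 := by
    rintro rfl
    apply hGne
    have := heq.self_of_nhds
    simpa [hw0] using this.symm
  obtain ⟨m, rfl⟩ : ∃ m, n = m + 1 :=
    ⟨n - 1, (Nat.succ_pred_eq_of_pos (Nat.pos_of_ne_zero hn0)).symm⟩
  refine ⟨m, rfl, ?_⟩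
  rw [hgz.analyticOrderAt_eq_natCast]
  have hψa : AnalyticAt ℂ (fun z => (z - w) ^ m • (G z * (1 - (starRingEnd ℂ) w * z))) w :=
    (((analyticAt_id.sub analyticAt_const).pow m).smul
      (hGa.mul (analyticAt_const.sub (analyticAt_const.mul analyticAt_id))))
  refine ⟨fun z => G z * (1 - (starRingEnd ℂ) w * z), ?_, ?_, ?_⟩
  · exact hGa.mul (analyticAt_const.sub (analyticAt_const.mul analyticAt_id))
  · exact mul_ne_zero hGne (u_ne_zero hw1 hw1)
  · rw [← AnalyticAt.frequently_eq_iff_eventually_eq hgz hψa]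
    apply Filter.Eventually.frequently
    rw [eventually_nhdsWithin_iff]
    filter_upwards [heq] with z hfz' hzw
    rw [mem_compl_iff, mem_singleton_iff] at hzw
    have hne : z - w ≠ 0 := sub_ne_zero.mpr hzw
    rw [dslope_of_ne f hzw, slope_def_field, hw0, sub_zero, hfz']
    simp only [smul_eq_mul]
    rw [pow_succ]
    field_simp

lemma step {M r : ℝ} (hr1 : r < 1) {f : ℂ → ℂ}
    (hf : AnalyticOnNhd ℂ f (ball (0:ℂ) 1))
    (hM : ∀ z ∈ ball (0:ℂ) 1, ‖f z‖ ≤ M)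
    (h0 : f 0 ≠ 0) {w : ℂ} (hwr : ‖w‖ ≤ r) (hw0 : f w = 0) :
    ∃ g : ℂ → ℂ, AnalyticOnNhd ℂ g (ball (0:ℂ) 1) ∧
      (∀ z ∈ ball (0:ℂ) 1, ‖g z‖ ≤ M) ∧ g 0 ≠ 0 ∧
      ‖f 0‖ = ‖w‖ * ‖g 0‖ ∧
      (∀ z, ‖z‖ ≤ r → g z = 0 → f z = 0) ∧
      (∀ z ∈ ball (0:ℂ) 1, z ≠ w → vanishingOrder g z = vanishingOrder f z) ∧
      vanishingOrder f w = vanishingOrder g w + 1 := by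
  have hw1 : ‖w‖ < 1 := lt_of_le_of_lt hwr hr1
  have hwball : w ∈ ball (0:ℂ) 1 := by
    simp only [mem_ball, dist_zero_right]; exact hw1
  have hwne : w ≠ 0 := by
    rintro rfl; exact h0 hw0
  set g : ℂ → ℂ := fun z => dslope f w z * (1 - (starRingEnd ℂ) w * z) with hgdef
  have hG : AnalyticOnNhd ℂ g (ball (0:ℂ) 1) := fun z hz =>
    ((analyticOnNhd_dslope hf hwball) z hz).mul
      (analyticAt_const.sub (analyticAt_const.mul analyticAt_id))
  have hGM : ∀ z ∈ ball (0:ℂ) 1, ‖g z‖ ≤ M := fun z hz =>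
    g_bound hr1 hf hM hwr hw0 hz
  have hfz : ∀ z, f z = (z - w) * dslope f w z := by
    intro z
    have := sub_smul_dslope f w z
    rw [smul_eq_mul] at this
    rw [this, hw0, sub_zero]
  have hg0v : g 0 = f 0 / (0 - w) := by
    rw [hgdef]
    simp only
    rw [dslope_of_ne f (fun hc => hwne hc.symm), slope_def_field, hw0, sub_zero]
    simp
  have hg0 : g 0 ≠ 0 := by
    rw [hg0v]
    exact div_ne_zero h0 (by simpa using hwne)
  have habsw : ‖w‖ ≠ 0 := by simpa using hwne
  have habs0 : ‖f 0‖ = ‖w‖ * ‖g 0‖ := by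
    rw [hg0v, norm_div]
    have haw : ‖0 - w‖ = ‖w‖ := by simp
    rw [haw, ← mul_div_assoc, mul_comm, mul_div_assoc, div_self habsw, mul_one]
  have hsubz : ∀ z, ‖z‖ ≤ r → g z = 0 → f z = 0 := by
    intro z hzr hgz
    rcases mul_eq_zero.mp hgz with hd | hu
    · rw [hfz z, hd, mul_zero]
    · exact absurd hu (u_ne_zero hw1 (lt_of_le_of_lt hzr hr1))
  have hordne : ∀ z ∈ ball (0:ℂ) 1, z ≠ w → vanishingOrder g z = vanishingOrder f z := by
    intro z hz hzw
    have hz1 : ‖z‖ < 1 := by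
      simpa [mem_ball, dist_zero_right] using hz
    have hfne := not_eventually_zero hf h0 hz
    have hgne := not_eventually_zero hG hg0 hz
    have h1 : analyticOrderAt f z = ((vanishingOrder f z : ℕ) : ℕ∞) :=
      order_eq_vanishingOrder (hf z hz) hfne
    have h2 : analyticOrderAt g z = ((vanishingOrder f z : ℕ) : ℕ∞) :=
      order_ne_case (hf z hz) (hG z hz) hw0 hzw hw1 hz1 h1
    have h3 : analyticOrderAt g z = ((vanishingOrder g z : ℕ) : ℕ∞) :=
      order_eq_vanishingOrder (hG z hz) hgne
    rw [h2] at h3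
    exact (Nat.cast_inj.mp h3).symm
  have hordw : vanishingOrder f w = vanishingOrder g w + 1 := by
    have hfne := not_eventually_zero hf h0 hwball
    have hgne := not_eventually_zero hG hg0 hwball
    have h1 : analyticOrderAt f w = ((vanishingOrder f w : ℕ) : ℕ∞) :=
      order_eq_vanishingOrder (hf w hwball) hfne
    obtain ⟨m, hm, h2⟩ := order_w_case (hf w hwball) (hG w hwball) hw0 hw1 h1
    have h3 : analyticOrderAt g w = ((vanishingOrder g w : ℕ) : ℕ∞) :=
      order_eq_vanishingOrder (hG w hwball) hgne
    rw [h2] at h3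
    have := (Nat.cast_inj.mp h3).symm
    omega
  exact ⟨g, hG, hGM, hg0, habs0, hsubz, hordne, hordw⟩

lemma key_induction {M r : ℝ} (hr0 : 0 < r) (hr1 : r < 1) :
    ∀ n : ℕ, ∀ f : ℂ → ℂ, AnalyticOnNhd ℂ f (ball (0:ℂ) 1) →
      (∀ z ∈ ball (0:ℂ) 1, ‖f z‖ ≤ M) → f 0 ≠ 0 →
      ∀ (hfin : {z : ℂ | ‖z‖ ≤ r ∧ f z = 0}.Finite),
      (∑ z ∈ hfin.toFinset, vanishingOrder f z) = n → ‖f 0‖ ≤ M * r ^ n := by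
  intro n
  induction n with
  | zero =>
    intro f hf hM h0 hfin hsum
    simpa using hM 0 (mem_ball_self one_pos)
  | succ n ih =>
    intro f hf hM h0 hfin hsum
    have hne : hfin.toFinset.Nonempty := by
      by_contra hcon
      rw [Finset.not_nonempty_iff_eq_empty] at hcon
      rw [hcon, Finset.sum_empty] at hsum
      omega
    obtain ⟨w, hwmem⟩ := hne
    obtain ⟨hwr, hw0⟩ := hfin.mem_toFinset.mp hwmem
    obtain ⟨g, hG, hGM, hg0, habs0, hsubz, hordne, hordw⟩ := step hr1 hf hM h0 hwr hw0
    have hfing : {z : ℂ | ‖z‖ ≤ r ∧ g z = 0}.Finite :=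
      hfin.subset (fun z hz => ⟨hz.1, hsubz z hz.1 hz.2⟩)
    have hsubfin : hfing.toFinset ⊆ hfin.toFinset := by
      intro x hx
      rw [Set.Finite.mem_toFinset] at *
      exact ⟨hx.1, hsubz x hx.1 hx.2⟩
    have hA : (∑ z ∈ hfing.toFinset, vanishingOrder g z)
        = ∑ z ∈ hfin.toFinset, vanishingOrder g z := by
      apply Finset.sum_subset hsubfin
      intro x hxt hxn
      rw [Set.Finite.mem_toFinset] at hxt
      rw [Set.Finite.mem_toFinset] at hxn
      apply vanishingOrder_eq_zero_of_ne_zero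
      intro hgx
      exact hxn ⟨hxt.1, hgx⟩
    have hB : (∑ z ∈ hfin.toFinset, vanishingOrder f z)
        = (∑ z ∈ hfin.toFinset, vanishingOrder g z) + 1 := by
      rw [← Finset.add_sum_erase _ _ hwmem, ← Finset.add_sum_erase _ (vanishingOrder g) hwmem]
      have hcongr : ∑ x ∈ hfin.toFinset.erase w, vanishingOrder f x
          = ∑ x ∈ hfin.toFinset.erase w, vanishingOrder g x := by
        apply Finset.sum_congr rfl
        intro x hx
        have hxw : x ≠ w := Finset.ne_of_mem_erase hx
        have hxm := hfin.mem_toFinset.mp (Finset.mem_of_mem_erase hx)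
        exact (hordne x (mem_ball_of_abs_le hr1 hxm.1) hxw).symm
      rw [hcongr, hordw]
      omega
    have hsumg : (∑ z ∈ hfing.toFinset, vanishingOrder g z) = n := by
      rw [hA]; omega
    have hIH := ih g hG hGM hg0 hfing hsumg
    rw [habs0]
    calc ‖w‖ * ‖g 0‖ ≤ r * (M * r ^ n) :=
          mul_le_mul hwr hIH (norm_nonneg _) hr0.le
      _ = M * r ^ (n + 1) := by ring

end Statement8Aux

/-- Let `h` be analytic on the open unit disk with `|h| ≤ M` and
`|h(0)| = 1`, and let `0 < r < 1`. Then the zero set of `h` in the closed disk of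
radius `r` is finite, and `n(h; r)·log(1/r) ≤ log M`, where `n(h; r)` is the number of
zeros counted with multiplicity. -/
theorem statement8 (h : ℂ → ℂ) (M : ℝ)
    (hana : ∀ z ∈ Metric.ball (0 : ℂ) 1, AnalyticAt ℂ h z)
    (hbdd : ∀ z ∈ Metric.ball (0 : ℂ) 1, ‖h z‖ ≤ M)
    (h0 : ‖h 0‖ = 1)
    (r : ℝ) (hr0 : 0 < r) (hr1 : r < 1) :
    ∃ hfin : {z : ℂ | ‖z‖ ≤ r ∧ h z = 0}.Finite,
      ((∑ z ∈ hfin.toFinset, vanishingOrder h z : ℕ) : ℝ) * Real.log (1 / r) ≤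
        Real.log M := by
  classical
  have h0ne : h 0 ≠ 0 := by
    intro hcon
    rw [hcon] at h0
    simp at h0
  have hana' : AnalyticOnNhd ℂ h (Metric.ball (0:ℂ) 1) := hana
  have hfin : {z : ℂ | ‖z‖ ≤ r ∧ h z = 0}.Finite :=
    Statement8Aux.zeros_finite hana' h0ne hr1
  refine ⟨hfin, ?_⟩
  set n := ∑ z ∈ hfin.toFinset, vanishingOrder h z with hn
  have hkey := Statement8Aux.key_induction hr0 hr1 n h hana' hbdd h0ne hfin rfl
  rw [h0] at hkey
  have hrn : (0:ℝ) < r ^ n := pow_pos hr0 n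
  have hpow : (1 / r) ^ n ≤ M := by
    rw [div_pow, one_pow, div_le_iff₀ hrn]
    linarith
  have hlog := Real.log_le_log (by positivity) hpow
  rwa [Real.log_pow] at hlog
end

section
/- Let X = ℓ¹(ℕ, ℂ), let L₀ ∈ B(X) be the right shift, L₀(x₁, x₂, x₃, …) = (0, x₁, x₂, …) (equivalently L₀δ_n = δ_{n+1} on the standard basis), let b = (b_k)_{k≥1} ∈ ℓ^∞(ℕ, ℂ), and let K ∈ B(X) be the rank-one operator Kf := (∑_{k=1}^{∞} b_k f_k)·δ₁. Set L := L₀ + K. Then for every λ ∈ ℂ with |λ| > 1: λ is an eigenvalue of L if and only if ∑_{k=1}^{∞} b_k λ^{−k} = 1. -/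
/-- Let `X = ℓ¹(ℕ, ℂ)`, let `L₀` be the right shift
`L₀(x₀, x₁, x₂, …) = (0, x₀, x₁, …)`, let `b ∈ ℓ^∞(ℕ, ℂ)` and let `K` be the rank-one
operator `K f = (∑_k b_k f_k)·δ₀`. Set `L := L₀ + K`. Then for every `λ ∈ ℂ` with
`|λ| > 1`: `λ` is an eigenvalue of `L` iff `∑_k b_k λ^{−(k+1)} = 1` (the indexing here
starts at `0`, so this is the condition `∑_{k=1}^∞ b_k λ^{−k} = 1` of the paper). -/
theorem statement18 (b : ℕ → ℂ) (hb : Memℓp b ⊤)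
    (L₀ K : lp (fun _ : ℕ => ℂ) 1 →L[ℂ] lp (fun _ : ℕ => ℂ) 1)
    (hL₀ : ∀ f : lp (fun _ : ℕ => ℂ) 1,
      (L₀ f : ∀ _ : ℕ, ℂ) 0 = 0 ∧
      ∀ n : ℕ, (L₀ f : ∀ _ : ℕ, ℂ) (n + 1) = (f : ∀ _ : ℕ, ℂ) n)
    (hK : ∀ f : lp (fun _ : ℕ => ℂ) 1,
      (K f : ∀ _ : ℕ, ℂ) 0 = (∑' k : ℕ, b k * (f : ∀ _ : ℕ, ℂ) k) ∧
      ∀ n : ℕ, (K f : ∀ _ : ℕ, ℂ) (n + 1) = 0)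
    (lam : ℂ) (hlam : 1 < ‖lam‖) :
    (∃ f : lp (fun _ : ℕ => ℂ) 1, f ≠ 0 ∧ (L₀ + K) f = lam • f) ↔
      ∑' k : ℕ, b k * lam⁻¹ ^ (k + 1) = 1 := by
  have hne : lam ≠ 0 := by
    intro h; rw [h] at hlam; simp at hlam; linarith
  have key : ∑' k : ℕ, b k * lam⁻¹ ^ (k + 1)
      = lam⁻¹ * ∑' k : ℕ, b k * lam⁻¹ ^ k := by
    rw [← tsum_mul_left]
    congr 1; funext k; ring
  constructor
  · rintro ⟨f, hf0, hfe⟩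
    have hcomp : ∀ n : ℕ, (L₀ f : ∀ _ : ℕ, ℂ) n + (K f : ∀ _ : ℕ, ℂ) n
        = lam * (f : ∀ _ : ℕ, ℂ) n := by
      intro n
      have h1 : ((L₀ + K) f : ∀ _ : ℕ, ℂ) n = ((lam • f : lp (fun _ : ℕ => ℂ) 1) : ∀ _ : ℕ, ℂ) n := by
        rw [hfe]
      simpa [ContinuousLinearMap.add_apply, lp.coeFn_add, lp.coeFn_smul] using h1
    have hrec : ∀ n : ℕ, (f : ∀ _ : ℕ, ℂ) n = (f : ∀ _ : ℕ, ℂ) 0 * lam⁻¹ ^ n := by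
      intro n
      induction n with
      | zero => simp
      | succ n ih =>
        have h := hcomp (n + 1)
        rw [(hL₀ f).2 n, (hK f).2 n, add_zero] at h
        have : (f : ∀ _ : ℕ, ℂ) (n + 1) = lam⁻¹ * (f : ∀ _ : ℕ, ℂ) n := by
          field_simp at h ⊢
          linear_combination -h
        rw [this, ih]; ring
    have hf00 : (f : ∀ _ : ℕ, ℂ) 0 ≠ 0 := by
      intro h0
      apply hf0
      apply lp.ext
      funext n
      have := hrec n
      rw [h0, zero_mul] at this
      simpa using this
    have h0 := hcomp 0
    rw [(hL₀ f).1, (hK f).1, zero_add] at h0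
    have hsum : (f : ∀ _ : ℕ, ℂ) 0 * ∑' k : ℕ, b k * lam⁻¹ ^ k
        = lam * (f : ∀ _ : ℕ, ℂ) 0 := by
      rw [← tsum_mul_left, ← h0]
      congr 1; funext k; rw [hrec k]; ring
    have hS : ∑' k : ℕ, b k * lam⁻¹ ^ k = lam := by
      have h2 : ((∑' k : ℕ, b k * lam⁻¹ ^ k) - lam) * (f : ∀ _ : ℕ, ℂ) 0 = 0 := by
        linear_combination hsum
      rcases mul_eq_zero.mp h2 with h3 | h3
      · exact sub_eq_zero.mp h3
      · exact absurd h3 hf00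
    rw [key, hS, inv_mul_cancel₀ hne]
  · intro hcond
    have hS : ∑' k : ℕ, b k * lam⁻¹ ^ k = lam := by
      rw [key] at hcond
      have := congrArg (fun x => lam * x) hcond
      simpa [← mul_assoc, mul_inv_cancel₀ hne] using this
    set g : ℕ → ℂ := fun k => lam⁻¹ ^ k with hg_def
    have hmem : Memℓp g 1 := by
      apply memℓp_gen
      have hr : ‖lam⁻¹‖ < 1 := by
        rw [norm_inv]
        rw [inv_lt_one_iff₀]
        right
        simpa using hlam
      have : Summable (fun k : ℕ => ‖lam⁻¹‖ ^ k) :=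
        summable_geometric_of_lt_one (norm_nonneg _) hr
      simpa [hg_def, norm_pow] using this
    set f : lp (fun _ : ℕ => ℂ) 1 := ⟨g, hmem⟩ with hf_def
    have hfcoe : ∀ n : ℕ, (f : ∀ _ : ℕ, ℂ) n = lam⁻¹ ^ n := fun n => rfl
    refine ⟨f, ?_, ?_⟩
    · intro h0
      have : (f : ∀ _ : ℕ, ℂ) 0 = 0 := by rw [h0]; simp
      rw [hfcoe 0] at this
      simp at this
    · apply lp.ext
      funext n
      have hL : ((L₀ + K) f : ∀ _ : ℕ, ℂ) n = (L₀ f : ∀ _ : ℕ, ℂ) n + (K f : ∀ _ : ℕ, ℂ) n := by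
        simp [ContinuousLinearMap.add_apply, lp.coeFn_add]
      have hR : ((lam • f : lp (fun _ : ℕ => ℂ) 1) : ∀ _ : ℕ, ℂ) n = lam * (f : ∀ _ : ℕ, ℂ) n := by
        simp [lp.coeFn_smul]
      rw [hL, hR]
      cases n with
      | zero =>
        rw [(hL₀ f).1, (hK f).1, zero_add, hfcoe 0]
        have : ∑' k : ℕ, b k * (f : ∀ _ : ℕ, ℂ) k = lam := hS
        rw [this]; ring
      | succ n =>
        rw [(hL₀ f).2 n, (hK f).2 n, add_zero, hfcoe n, hfcoe (n + 1)]
        rw [pow_succ, ← mul_assoc, mul_comm lam, mul_assoc, mul_inv_cancel₀ hne, mul_one]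
end

section
/- Let b = (b_k)_{k≥1} ∈ ℓ^∞(ℕ, ℂ) and define h(w) := 1 − ∑_{k=1}^{∞} b_k w^k for w in the open unit disk 𝔻. Suppose the set Z := {w ∈ 𝔻 : h(w) = 0} satisfies ∑_{w ∈ Z} (1 − |w|) = ∞ (i.e., the family (1 − |w|)_{w∈Z} is not summable). Let X = ℓ¹(ℕ, ℂ), let L₀ be the right shift L₀(x₁, x₂, …) = (0, x₁, x₂, …), let K be the rank-one operator Kf := (∑_{k=1}^{∞} b_k f_k)·δ₁, and set L := L₀ + K. Then, with E := {λ ∈ ℂ : |λ| > 1 and λ is an eigenvalue of L}, the family ((|λ| − 1))_{λ ∈ E} is not summable, i.e., ∑_{λ ∈ E} (|λ| − 1) = ∞. (In particular, ‖L₀‖ = 1 and L − L₀ has rank one, yet the eigenvalues of L outside the closed unit disk fail the order-one summability condition that always holds for rank-one perturbations in Hilbert space.) -/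
set_option maxHeartbeats 1000000

/-- Let `b ∈ ℓ^∞(ℕ, ℂ)` and `h(w) := 1 − ∑_k b_k w^{k+1}` on the open
unit disk, and suppose the zeros `Z` of `h` in the disk satisfy
`∑_{w ∈ Z} (1 − |w|) = ∞` (the family is not summable). Let `X = ℓ¹(ℕ, ℂ)`, `L₀` the
right shift, `K` the rank-one operator `K f = (∑_k b_k f_k)·δ₀` and `L := L₀ + K`.
Then, with `E` the set of eigenvalues of `L` of modulus greater than `1`, the family
`(|λ| − 1)_{λ ∈ E}` is not summable. -/
theorem statement19 (b : ℕ → ℂ) (hb : Memℓp b ⊤)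
    (hZ : ¬ Summable (fun w : {w : ℂ | w ∈ Metric.ball (0 : ℂ) 1 ∧
        1 - ∑' k : ℕ, b k * w ^ (k + 1) = 0} => 1 - ‖(w : ℂ)‖))
    (L₀ K : lp (fun _ : ℕ => ℂ) 1 →L[ℂ] lp (fun _ : ℕ => ℂ) 1)
    (hL₀ : ∀ f : lp (fun _ : ℕ => ℂ) 1,
      (L₀ f : ∀ _ : ℕ, ℂ) 0 = 0 ∧
      ∀ n : ℕ, (L₀ f : ∀ _ : ℕ, ℂ) (n + 1) = (f : ∀ _ : ℕ, ℂ) n)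
    (hK : ∀ f : lp (fun _ : ℕ => ℂ) 1,
      (K f : ∀ _ : ℕ, ℂ) 0 = (∑' k : ℕ, b k * (f : ∀ _ : ℕ, ℂ) k) ∧
      ∀ n : ℕ, (K f : ∀ _ : ℕ, ℂ) (n + 1) = 0) :
    ¬ Summable (fun z : {z : ℂ | 1 < ‖z‖ ∧
        ∃ f : lp (fun _ : ℕ => ℂ) 1, f ≠ 0 ∧ (L₀ + K) f = z • f} =>
      ‖(z : ℂ)‖ - 1) := by
  intro hsum
  apply hZ
  -- every zero of h in the disk is nonzero
  have hwne : ∀ w : ℂ, w ∈ Metric.ball (0 : ℂ) 1 →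
      1 - ∑' k : ℕ, b k * w ^ (k + 1) = 0 → w ≠ 0 := by
    intro w _ h0 hweq
    rw [hweq] at h0
    have hz : ∀ k : ℕ, b k * (0 : ℂ) ^ (k + 1) = 0 := fun k => by simp
    rw [tsum_congr hz, tsum_zero] at h0
    simp at h0
  -- key : 1/w is an eigenvalue
  have key : ∀ w : ℂ, w ∈ Metric.ball (0 : ℂ) 1 →
      1 - ∑' k : ℕ, b k * w ^ (k + 1) = 0 →
      1 < ‖w⁻¹‖ ∧
      ∃ f : lp (fun _ : ℕ => ℂ) 1, f ≠ 0 ∧ (L₀ + K) f = w⁻¹ • f := by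
    intro w hwb h0
    have hw0 : w ≠ 0 := hwne w hwb h0
    have habs : ‖w‖ < 1 := by
      simpa [Complex.dist_eq] using Metric.mem_ball.mp hwb
    have habs0 : 0 < ‖w‖ := by
      simpa using (norm_pos_iff.mpr hw0)
    constructor
    · rw [norm_inv]
      exact (one_lt_inv₀ habs0).mpr habs
    · have hmem : Memℓp (fun n : ℕ => w ^ n) 1 := by
        apply memℓp_gen
        simp only [ENNReal.toReal_one, Real.rpow_one, norm_pow]
        exact summable_geometric_of_lt_one habs0.le habs
      set F : lp (fun _ : ℕ => ℂ) 1 := ⟨fun n : ℕ => w ^ n, hmem⟩ with hF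
      have hFcoe : ∀ n, (F : ∀ _ : ℕ, ℂ) n = w ^ n := fun n => rfl
      refine ⟨F, ?_, ?_⟩
      · intro h
        have := congrArg (fun x : lp (fun _ : ℕ => ℂ) 1 => (x : ∀ _ : ℕ, ℂ) 0) h
        simp [hFcoe] at this
      · -- tsum
        have hS : ∑' k : ℕ, b k * w ^ k = w⁻¹ := by
          have h1 : ∑' k : ℕ, b k * w ^ (k + 1) = 1 := by linear_combination -h0
          have h2 : ∑' k : ℕ, b k * w ^ (k + 1) = w * ∑' k : ℕ, b k * w ^ k := by
            rw [← tsum_mul_left]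
            congr 1; funext k; ring
          field_simp
          rw [mul_comm, ← h2, h1]
        apply Subtype.ext
        funext n
        have hadd : ((L₀ + K) F : ∀ _ : ℕ, ℂ) n
            = (L₀ F : ∀ _ : ℕ, ℂ) n + (K F : ∀ _ : ℕ, ℂ) n := by
          rw [ContinuousLinearMap.add_apply]
          exact congrFun (lp.coeFn_add (L₀ F) (K F)) n
        have hsmul : ((w⁻¹ • F : lp (fun _ : ℕ => ℂ) 1) : ∀ _ : ℕ, ℂ) n
            = w⁻¹ * (F : ∀ _ : ℕ, ℂ) n := by
          exact congrFun (lp.coeFn_smul w⁻¹ F) n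
        show ((L₀ + K) F : ∀ _ : ℕ, ℂ) n = ((w⁻¹ • F : lp (fun _ : ℕ => ℂ) 1) : ∀ _ : ℕ, ℂ) n
        rw [hadd, hsmul]
        cases n with
        | zero =>
          rw [(hL₀ F).1, (hK F).1, hFcoe]
          simp only [hFcoe, pow_zero, mul_one]
          rw [hS, zero_add]
        | succ m =>
          rw [(hL₀ F).2 m, (hK F).2 m, hFcoe, hFcoe]
          field_simp
          ring
  -- transfer summability
  set Zs := {w : ℂ | w ∈ Metric.ball (0 : ℂ) 1 ∧ 1 - ∑' k : ℕ, b k * w ^ (k + 1) = 0}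
  set Es := {z : ℂ | 1 < ‖z‖ ∧
      ∃ f : lp (fun _ : ℕ => ℂ) 1, f ≠ 0 ∧ (L₀ + K) f = z • f}
  have hcomp : Summable (fun w : Zs => ‖((w : ℂ)⁻¹)‖ - 1) := by
    have hinj : Function.Injective
        (fun w : Zs => (⟨(w : ℂ)⁻¹, key w w.2.1 w.2.2⟩ : Es)) := by
      intro x y hxy
      exact Subtype.ext (inv_injective (congrArg Subtype.val hxy))
    have hcomp0 := hsum.comp_injective hinj
    exact hcomp0.congr (fun w => rfl)
  apply hcomp.of_nonneg_of_le
  · intro w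
    have habs : ‖(w : ℂ)‖ < 1 := by
      simpa [Complex.dist_eq] using Metric.mem_ball.mp w.2.1
    linarith
  · intro w
    have habs : ‖(w : ℂ)‖ < 1 := by
      simpa [Complex.dist_eq] using Metric.mem_ball.mp w.2.1
    have hw0 : (w : ℂ) ≠ 0 := hwne w w.2.1 w.2.2
    have habs0 : 0 < ‖(w : ℂ)‖ := by
      simpa using (norm_pos_iff.mpr hw0)
    rw [norm_inv]
    set a := ‖(w : ℂ)‖
    have h1 : a * a⁻¹ = 1 := mul_inv_cancel₀ habs0.ne'
    nlinarith [sq_nonneg (a - 1)]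
end
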